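/- Let (A,B) be an n×n bimatrix game all of whose payoff entries are strictly positive, and let G' be the 2n×2n symmetrized bimatrix game whose row-player payoff matrix is R = [[0, A],[Bᵀ, 0]] and whose column-player payoff matrix is C = Rᵀ = [[0, B],[Aᵀ, 0]] (in block form, with 0 denoting the n×n zero matrix). Let (X, Y) ∈ Δ^{2n} × Δ^{2n} be a Nash equilibrium of G', and set p = Σ_{i=1}^n X_i and q = Σ_{i=1}^n Y_i. If p > 0 and q < 1, then the probability vectors x = (X_1/p, …, X_n/p) and y = (Y_{n+1}/(1−q), …, Y_{2n}/(1−q)) form a Nash equilibrium of (A,B). -/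

import Mathlib

open Matrix

/-- A probability vector over a finite index set. -/
def IsProbVec {ι : Type*} [Fintype ι] (x : ι → ℝ) : Prop :=
  (∀ i, 0 ≤ x i) ∧ ∑ i, x i = 1

/-- Nash equilibrium of the bimatrix game `(A, B)`: `x, y` are probability vectors,
`x` maximises `x'ᵀ A y` and `y` maximises `xᵀ B y'`. -/
def IsNashEq {ι κ : Type*} [Fintype ι] [Fintype κ]
    (A B : Matrix ι κ ℝ) (x : ι → ℝ) (y : κ → ℝ) : Prop :=
  IsProbVec x ∧ IsProbVec y ∧
    (∀ x' : ι → ℝ, IsProbVec x' →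
      dotProduct x' (A.mulVec y) ≤ dotProduct x (A.mulVec y)) ∧
    (∀ y' : κ → ℝ, IsProbVec y' →
      dotProduct x (B.mulVec y') ≤ dotProduct x (B.mulVec y))

lemma single_isProbVec {ι : Type*} [Fintype ι] [DecidableEq ι] (k : ι) :
    IsProbVec (Pi.single k (1:ℝ)) := by
  constructor
  · intro i; rcases eq_or_ne i k with h|h <;> simp [Pi.single_apply, h]
  · simp [Finset.sum_pi_single']

/-- Recovering a Nash equilibrium of `(A, B)` from a Nash equilibrium of the
symmetrized game `G' = (R, Rᵀ)` with `R = [[0, A], [Bᵀ, 0]]`: if, in a Nash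
equilibrium `(X, Y)` of `G'`, the row player puts total probability `p > 0` on the
first `n` strategies and the column player puts total probability `q < 1` on them,
then the normalised vectors `x_i = X_i / p` and `y_j = Y_{n+j} / (1 - q)` form a
Nash equilibrium of `(A, B)`. -/
theorem symmetrization_recovers_nash (n : ℕ)
    (A B : Matrix (Fin n) (Fin n) ℝ)
    (hA : ∀ i j, 0 < A i j) (hB : ∀ i j, 0 < B i j)
    (X Y : Fin n ⊕ Fin n → ℝ)
    (hXY : IsNashEq (Matrix.fromBlocks 0 A Bᵀ 0) (Matrix.fromBlocks 0 A Bᵀ 0)ᵀ X Y)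
    (p q : ℝ)
    (hp : p = ∑ i : Fin n, X (Sum.inl i))
    (hq : q = ∑ i : Fin n, Y (Sum.inl i))
    (hppos : 0 < p) (hqlt : q < 1) :
    IsNashEq A B (fun i => X (Sum.inl i) / p) (fun j => Y (Sum.inr j) / (1 - q)) := by

  obtain ⟨⟨hXnn, hXsum⟩, ⟨hYnn, hYsum⟩, hrow, hcol⟩ := hXY
  have hq' : (0:ℝ) < 1 - q := by linarith
  set R := Matrix.fromBlocks 0 A Bᵀ 0 with hR
  set u := R.mulVec Y with hu
  set c := R.mulVec X with hc
  set v := dotProduct X u with hv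
  set w := dotProduct c Y with hw
  -- component formulas
  have hu1 : ∀ i, u (Sum.inl i) = ∑ j, A i j * Y (Sum.inr j) := by
    intro i
    simp [hu, hR, Matrix.mulVec, dotProduct, Fintype.sum_sum_type,
      Matrix.fromBlocks]
  have hc1 : ∀ i, c (Sum.inl i) = ∑ j, A i j * X (Sum.inr j) := by
    intro i
    simp [hc, hR, Matrix.mulVec, dotProduct, Fintype.sum_sum_type,
      Matrix.fromBlocks]
  have hc2 : ∀ j, c (Sum.inr j) = ∑ i, B i j * X (Sum.inl i) := by
    intro j
    simp [hc, hR, Matrix.mulVec, dotProduct, Fintype.sum_sum_type,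
      Matrix.fromBlocks, Matrix.transpose_apply]
  -- best-response bounds on pure strategies
  have hmaxu : ∀ k, u k ≤ v := by
    intro k
    have h := hrow (Pi.single k 1) (single_isProbVec k)
    simpa [single_dotProduct] using h
  have hcol' : ∀ Y' : Fin n ⊕ Fin n → ℝ, IsProbVec Y' →
      dotProduct c Y' ≤ w := by
    intro Y' hY'
    have h := hcol Y' hY'
    rwa [Matrix.dotProduct_mulVec, Matrix.dotProduct_mulVec,
      Matrix.vecMul_transpose, ← hc, ← hw] at h
  have hmaxc : ∀ k, c k ≤ w := by
    intro k
    have h := hcol' (Pi.single k 1) (single_isProbVec k)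
    simpa [dotProduct_single] using h
  -- sum decompositions
  have hXsplit : (∑ i : Fin n, X (Sum.inl i)) + ∑ j : Fin n, X (Sum.inr j) = 1 := by
    rw [← Fintype.sum_sum_type]; exact hXsum
  have hYsplit : (∑ i : Fin n, Y (Sum.inl i)) + ∑ j : Fin n, Y (Sum.inr j) = 1 := by
    rw [← Fintype.sum_sum_type]; exact hYsum
  have hXr : ∑ j : Fin n, X (Sum.inr j) = 1 - p := by rw [hp]; linarith
  have hYr : ∑ j : Fin n, Y (Sum.inr j) = 1 - q := by rw [hq]; linarith
  have hvsplit : v = (∑ i, X (Sum.inl i) * u (Sum.inl i))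
      + ∑ j, X (Sum.inr j) * u (Sum.inr j) := by
    rw [hv, dotProduct, Fintype.sum_sum_type]
  have hwsplit : w = (∑ i, c (Sum.inl i) * Y (Sum.inl i))
      + ∑ j, c (Sum.inr j) * Y (Sum.inr j) := by
    rw [hw, dotProduct, Fintype.sum_sum_type]
  -- key inequalities
  have hkey1 : p * v ≤ ∑ i, X (Sum.inl i) * u (Sum.inl i) := by
    have hb : ∑ j, X (Sum.inr j) * u (Sum.inr j) ≤ (1 - p) * v := by
      calc ∑ j, X (Sum.inr j) * u (Sum.inr j)
          ≤ ∑ j : Fin n, X (Sum.inr j) * v :=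
            Finset.sum_le_sum fun j _ => mul_le_mul_of_nonneg_left (hmaxu _) (hXnn _)
        _ = (1 - p) * v := by rw [← Finset.sum_mul, hXr]
    nlinarith [hvsplit]
  have hkey2 : (1 - q) * w ≤ ∑ j, c (Sum.inr j) * Y (Sum.inr j) := by
    have hb : ∑ i, c (Sum.inl i) * Y (Sum.inl i) ≤ q * w := by
      calc ∑ i, c (Sum.inl i) * Y (Sum.inl i)
          ≤ ∑ i : Fin n, w * Y (Sum.inl i) :=
            Finset.sum_le_sum fun i _ => mul_le_mul_of_nonneg_right (hmaxc _) (hYnn _)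
        _ = q * w := by rw [← Finset.mul_sum, ← hq, mul_comm]
    nlinarith [hwsplit]
  -- the normalized vectors
  have hxprob : IsProbVec (fun i => X (Sum.inl i) / p) := by
    refine ⟨fun i => div_nonneg (hXnn _) hppos.le, ?_⟩
    rw [← Finset.sum_div, ← hp, div_self hppos.ne']
  have hyprob : IsProbVec (fun j => Y (Sum.inr j) / (1 - q)) := by
    refine ⟨fun j => div_nonneg (hYnn _) hq'.le, ?_⟩
    rw [← Finset.sum_div, hYr, div_self hq'.ne']
  have hAy : ∀ i, (A.mulVec fun j => Y (Sum.inr j) / (1 - q)) i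
      = u (Sum.inl i) / (1 - q) := by
    intro i
    rw [hu1 i, Matrix.mulVec, dotProduct, Finset.sum_div]
    exact Finset.sum_congr rfl fun j _ => (mul_div_assoc _ _ _).symm
  refine ⟨hxprob, hyprob, ?_, ?_⟩
  · -- row player's optimality
    intro x' hx'
    have h1 : dotProduct x' (A.mulVec fun j => Y (Sum.inr j) / (1 - q))
        ≤ v / (1 - q) := by
      calc dotProduct x' (A.mulVec fun j => Y (Sum.inr j) / (1 - q))
          = ∑ i, x' i * (u (Sum.inl i) / (1 - q)) :=
            Finset.sum_congr rfl fun i _ => by rw [hAy i]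
        _ ≤ ∑ i : Fin n, x' i * (v / (1 - q)) := by
            refine Finset.sum_le_sum fun i _ => mul_le_mul_of_nonneg_left ?_ (hx'.1 _)
            gcongr
            exact hmaxu _
        _ = v / (1 - q) := by rw [← Finset.sum_mul, hx'.2, one_mul]
    have h2 : v / (1 - q)
        ≤ dotProduct (fun i => X (Sum.inl i) / p)
            (A.mulVec fun j => Y (Sum.inr j) / (1 - q)) := by
      have heq : dotProduct (fun i => X (Sum.inl i) / p)
          (A.mulVec fun j => Y (Sum.inr j) / (1 - q))
          = (∑ i, X (Sum.inl i) * u (Sum.inl i)) / (p * (1 - q)) := by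
        rw [Finset.sum_div]
        refine Finset.sum_congr rfl fun i _ => ?_
        rw [hAy i, div_mul_div_comm]
      rw [heq, div_le_div_iff₀ hq' (by positivity)]
      nlinarith [hkey1]
    linarith
  · -- column player's optimality
    intro y' hy'
    have hBy : ∀ y'' : Fin n → ℝ,
        dotProduct (fun i => X (Sum.inl i) / p) (B.mulVec y'')
        = (∑ j, c (Sum.inr j) * y'' j) / p := by
      intro y''
      have h1 : dotProduct (fun i => X (Sum.inl i) / p) (B.mulVec y'')
          = (dotProduct (fun i => X (Sum.inl i)) (B.mulVec y'')) / p := by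
        rw [dotProduct, dotProduct, Finset.sum_div]
        exact Finset.sum_congr rfl fun i _ => div_mul_eq_mul_div _ _ _
      rw [h1, Matrix.dotProduct_mulVec]
      congr 1
      rw [dotProduct]
      refine Finset.sum_congr rfl fun j _ => ?_
      congr 1
      rw [hc2 j, Matrix.vecMul, dotProduct]
      exact Finset.sum_congr rfl fun i _ => mul_comm _ _
    have h1 : dotProduct (fun i => X (Sum.inl i) / p) (B.mulVec y') ≤ w / p := by
      rw [hBy y']
      gcongr
      calc ∑ j, c (Sum.inr j) * y' j
          ≤ ∑ j : Fin n, w * y' j :=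
            Finset.sum_le_sum fun j _ => mul_le_mul_of_nonneg_right (hmaxc _) (hy'.1 _)
        _ = w := by rw [← Finset.mul_sum, hy'.2, mul_one]
    have h2 : w / p ≤ dotProduct (fun i => X (Sum.inl i) / p)
        (B.mulVec fun j => Y (Sum.inr j) / (1 - q)) := by
      rw [hBy]
      gcongr
      have heq : ∑ j, c (Sum.inr j) * (Y (Sum.inr j) / (1 - q))
          = (∑ j, c (Sum.inr j) * Y (Sum.inr j)) / (1 - q) := by
        rw [Finset.sum_div]
        exact Finset.sum_congr rfl fun j _ => (mul_div_assoc _ _ _).symm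
      rw [heq, le_div_iff₀ hq']
      nlinarith [hkey2]
    linarith
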